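/- Let σ be a schedule serving a set S, let i ∈ S, and let Sᵢ and Cᵢ be respectively the smallest and largest slot at which i appears in σ. Assume that every slot t with Sᵢ ≤ t ≤ Cᵢ satisfies σ t = some i or σ t = none. Define σ' by: σ' t = some i for t ∈ {Cᵢ − ν i + 1, …, Cᵢ}, σ' t = none for t ∈ {Sᵢ, …, Cᵢ − ν i}, and σ' t = σ t for all other t. Then σ' serves S, and the slots assigned to i in σ' form a set of consecutive integers. (The single-user right-justification step in the proof of Lemma 6.) -/

import Mathlib

/-- A schedule `σ : ℕ → Option (Fin U)` serves the user set `S`: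
(i) the users appearing in slots `{1,…,T}` are exactly those of `S`;
(ii) each `u ∈ S` appears in exactly `ν u` slots;
(iii) every slot at which a user `u` appears is at most `d u`;
(iv) for every `t ∈ {1,…,T}`, the number of busy slots in `{1,…,t}` is at most
`∑_{s=1}^{t} A s`. -/
def Serves (T U : ℕ) (ν d : Fin U → ℕ) (A : ℕ → ℕ)
    (σ : ℕ → Option (Fin U)) (S : Finset (Fin U)) : Prop :=
  (∀ u : Fin U, u ∈ S ↔ ∃ t ∈ Finset.Icc 1 T, σ t = some u) ∧
  (∀ u ∈ S, ((Finset.Icc 1 T).filter (fun t => σ t = some u)).card = ν u) ∧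
  (∀ u : Fin U, ∀ t ∈ Finset.Icc 1 T, σ t = some u → t ≤ d u) ∧
  (∀ t ∈ Finset.Icc 1 T,
    ((Finset.Icc 1 t).filter (fun s => σ s ≠ none)).card ≤ ∑ s ∈ Finset.Icc 1 t, A s)

/-- A user set is feasible if some schedule serves it. -/
def Feasible (T U : ℕ) (ν d : Fin U → ℕ) (A : ℕ → ℕ) (S : Finset (Fin U)) : Prop :=
  ∃ σ : ℕ → Option (Fin U), Serves T U ν d A σ S

/-- Single-user right-justification step in the proof of Lemma 6: if `i` occupies only
slots in `[Sᵢ, Cᵢ]` whose other slots are idle, then packing `i` into the last `ν i`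
slots `{Cᵢ − ν i + 1, …, Cᵢ}` yields a schedule that still serves `S`, and the slots
assigned to `i` are consecutive. -/
theorem stmt3 (T U : ℕ) (ν d : Fin U → ℕ) (A : ℕ → ℕ)
    (hν : ∀ i, 1 ≤ ν i) (hd : ∀ i, d i ∈ Finset.Icc 1 T)
    (σ : ℕ → Option (Fin U)) (S : Finset (Fin U))
    (hserve : Serves T U ν d A σ S)
    (i : Fin U) (hi : i ∈ S)
    (Si Ci : ℕ)
    (hSi : IsLeast {t | t ∈ Finset.Icc 1 T ∧ σ t = some i} Si)
    (hCi : IsGreatest {t | t ∈ Finset.Icc 1 T ∧ σ t = some i} Ci)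
    (hgap : ∀ t, Si ≤ t → t ≤ Ci → σ t = some i ∨ σ t = none)
    (σ' : ℕ → Option (Fin U))
    (hσ' : σ' = fun t =>
      if Ci - ν i + 1 ≤ t ∧ t ≤ Ci then some i
      else if Si ≤ t ∧ t ≤ Ci then none
      else σ t) :
    Serves T U ν d A σ' S ∧
    (Finset.Icc 1 T).filter (fun t => σ' t = some i) = Finset.Icc (Ci - ν i + 1) Ci := by
  obtain ⟨h1, h2, h3, h4⟩ := hserve
  obtain ⟨⟨hSmem, hSeq⟩, hSle⟩ := hSi
  obtain ⟨⟨hCmem, hCeq⟩, hCle⟩ := hCi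
  simp only [Finset.mem_Icc] at hSmem hCmem
  have hSC : Si ≤ Ci := hSle ⟨by simp only [Finset.mem_Icc]; omega, hCeq⟩
  have hνi := hν i
  have hFsub : (Finset.Icc 1 T).filter (fun t => σ t = some i) ⊆ Finset.Icc Si Ci := by
    intro t ht
    simp only [Finset.mem_filter, Finset.mem_Icc] at ht ⊢
    exact ⟨hSle ⟨by simp only [Finset.mem_Icc]; omega, ht.2⟩,
           hCle ⟨by simp only [Finset.mem_Icc]; omega, ht.2⟩⟩
  have hcardF : ((Finset.Icc 1 T).filter (fun t => σ t = some i)).card = ν i := h2 i hi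
  have hkey : Si + ν i ≤ Ci + 1 := by
    have := Finset.card_le_card hFsub
    rw [hcardF, Nat.card_Icc] at this; omega
  have hdCi : Ci ≤ d i := h3 i Ci (by simp only [Finset.mem_Icc]; omega) hCeq
  have hval : ∀ t, σ' t = if Ci - ν i + 1 ≤ t ∧ t ≤ Ci then some i
      else if Si ≤ t ∧ t ≤ Ci then none else σ t := fun t => by rw [hσ']
  -- characterization for i
  have key : ∀ t, 1 ≤ t → t ≤ T → (σ' t = some i ↔ (Ci - ν i + 1 ≤ t ∧ t ≤ Ci)) := by
    intro t ht1 ht2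
    rw [hval]
    split_ifs with ha hb
    · exact iff_of_true rfl ha
    · exact iff_of_false (by simp) ha
    · refine iff_of_false (fun h => hb ?_) ha
      exact ⟨hSle ⟨by simp only [Finset.mem_Icc]; omega, h⟩,
             hCle ⟨by simp only [Finset.mem_Icc]; omega, h⟩⟩
  -- characterization for u ≠ i
  have keyu : ∀ u : Fin U, u ≠ i → ∀ t, (σ' t = some u ↔ (σ t = some u ∧ ¬(Si ≤ t ∧ t ≤ Ci))) := by
    intro u hu t
    rw [hval]
    split_ifs with ha hb
    · refine iff_of_false (fun h => hu (Option.some.inj h).symm) (fun h => h.2 ⟨by omega, ha.2⟩)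
    · exact iff_of_false (by simp) (fun h => h.2 hb)
    · constructor
      · intro h; exact ⟨h, hb⟩
      · intro h; exact h.1
  have keyu' : ∀ u : Fin U, u ≠ i → ∀ t, (σ' t = some u ↔ σ t = some u) := by
    intro u hu t
    rw [keyu u hu t]
    constructor
    · exact fun h => h.1
    · intro h
      refine ⟨h, fun hc => ?_⟩
      rcases hgap t hc.1 hc.2 with h' | h' <;> rw [h'] at h
      · exact hu (Option.some.inj h).symm
      · cases h
  -- second conclusion
  have hconc2 : (Finset.Icc 1 T).filter (fun t => σ' t = some i)
      = Finset.Icc (Ci - ν i + 1) Ci := by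
    ext t
    simp only [Finset.mem_filter, Finset.mem_Icc]
    constructor
    · rintro ⟨⟨ht1, ht2⟩, ht3⟩
      exact (key t ht1 ht2).1 ht3
    · intro h
      have ht1 : 1 ≤ t := by omega
      have ht2 : t ≤ T := by omega
      exact ⟨⟨ht1, ht2⟩, (key t ht1 ht2).2 h⟩
  refine ⟨⟨?_, ?_, ?_, ?_⟩, hconc2⟩
  · -- (i)
    intro u
    by_cases hu : u = i
    · subst hu
      refine iff_of_true hi ⟨Ci, by simp only [Finset.mem_Icc]; omega, ?_⟩
      exact (key Ci (by omega) (by omega)).2 (by omega)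
    · rw [h1 u]
      constructor
      · rintro ⟨t, ht, hts⟩
        exact ⟨t, ht, (keyu' u hu t).2 hts⟩
      · rintro ⟨t, ht, hts⟩
        exact ⟨t, ht, (keyu' u hu t).1 hts⟩
  · -- (ii)
    intro u hu
    by_cases hu' : u = i
    · subst hu'
      rw [hconc2, Nat.card_Icc]
      omega
    · rw [← h2 u hu]
      have hfe : Finset.filter (fun t => σ' t = some u) (Finset.Icc 1 T)
          = Finset.filter (fun t => σ t = some u) (Finset.Icc 1 T) :=
        Finset.filter_congr (fun t _ => by rw [keyu' u hu' t])
      rw [hfe]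
  · -- (iii)
    intro u t ht hts
    simp only [Finset.mem_Icc] at ht
    by_cases hu : u = i
    · subst hu
      have := (key t ht.1 ht.2).1 hts
      omega
    · exact h3 u t (by simp only [Finset.mem_Icc]; exact ht) ((keyu' u hu t).1 hts)
  · -- (iv) energy
    intro t ht
    refine le_trans ?_ (h4 t ht)
    simp only [Finset.mem_Icc] at ht
    by_cases hts : t < Si
    · refine le_of_eq (Finset.card_le_card ?_ |>.antisymm (Finset.card_le_card ?_)).symm
      all_goals {
        intro s hs
        simp only [Finset.mem_filter, Finset.mem_Icc] at hs ⊢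
        refine ⟨hs.1, ?_⟩
        have hss : σ' s = σ s := by
          rw [hval]; rw [if_neg (by omega), if_neg (by omega)]
        first
        | (rw [← hss]; exact hs.2)
        | (rw [hss]; exact hs.2) }
    · push_neg at hts
      set m := min t Ci with hm
      have hm1 : Si ≤ m := by omega
      have hm2 : m ≤ t := by omega
      have hm3 : m ≤ Ci := by omega
      have hsub : Finset.Icc Si m ⊆ Finset.Icc 1 t := by
        intro s hs; simp only [Finset.mem_Icc] at hs ⊢; omega
      have hsplit : Finset.Icc 1 t = (Finset.Icc 1 t \ Finset.Icc Si m) ∪ Finset.Icc Si m :=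
        (Finset.sdiff_union_of_subset hsub).symm
      have hdisj : Disjoint (Finset.Icc 1 t \ Finset.Icc Si m) (Finset.Icc Si m) :=
        Finset.sdiff_disjoint
      have hDeq : ∀ s ∈ Finset.Icc 1 t \ Finset.Icc Si m, σ' s = σ s := by
        intro s hs
        simp only [Finset.mem_sdiff, Finset.mem_Icc, not_and, not_le] at hs
        have : s < Si ∨ Ci < s := by omega
        rw [hval]; rw [if_neg (by omega), if_neg (by omega)]
      have hc1 : ((Finset.Icc 1 t \ Finset.Icc Si m).filter (fun s => σ' s ≠ none))
          = ((Finset.Icc 1 t \ Finset.Icc Si m).filter (fun s => σ s ≠ none)) :=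
        Finset.filter_congr (fun s hs => by rw [hDeq s hs])
      have hc2 : ((Finset.Icc Si m).filter (fun s => σ' s ≠ none))
          = Finset.Icc (Ci - ν i + 1) m := by
        ext s
        simp only [Finset.mem_filter, Finset.mem_Icc]
        constructor
        · rintro ⟨⟨hs1, hs2⟩, hs3⟩
          rw [hval] at hs3
          split_ifs at hs3 with ha hb
          · exact ⟨ha.1, hs2⟩
          · exact absurd rfl hs3
          · omega
        · intro hs
          refine ⟨⟨by omega, hs.2⟩, ?_⟩
          rw [hval, if_pos ⟨hs.1, by omega⟩]
          simp
      -- lower bound on busy σ slots in Icc Si m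
      have hFlow : ν i ≤ ((Finset.Icc Si m).filter (fun s => σ s ≠ none)).card + (Ci - m) := by
        have hsub2 : (Finset.Icc 1 T).filter (fun s => σ s = some i)
            ⊆ ((Finset.Icc Si m).filter (fun s => σ s ≠ none)) ∪ Finset.Icc (m + 1) Ci := by
          intro s hs
          have hs' := hFsub hs
          simp only [Finset.mem_filter, Finset.mem_Icc] at hs hs'
          simp only [Finset.mem_union, Finset.mem_filter, Finset.mem_Icc]
          by_cases hsm : s ≤ m
          · exact Or.inl ⟨⟨hs'.1, hsm⟩, by rw [hs.2]; simp⟩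
          · exact Or.inr ⟨by omega, hs'.2⟩
        calc ν i = ((Finset.Icc 1 T).filter (fun s => σ s = some i)).card := hcardF.symm
          _ ≤ (((Finset.Icc Si m).filter (fun s => σ s ≠ none)) ∪ Finset.Icc (m + 1) Ci).card :=
              Finset.card_le_card hsub2
          _ ≤ ((Finset.Icc Si m).filter (fun s => σ s ≠ none)).card + (Finset.Icc (m + 1) Ci).card :=
              Finset.card_union_le _ _
          _ = ((Finset.Icc Si m).filter (fun s => σ s ≠ none)).card + (Ci - m) := by
              rw [Nat.card_Icc]; omega
      rw [hsplit, Finset.filter_union, Finset.filter_union,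
        Finset.card_union_of_disjoint (Finset.disjoint_filter_filter hdisj),
        Finset.card_union_of_disjoint (Finset.disjoint_filter_filter hdisj),
        hc1, hc2, Nat.card_Icc]
      omega
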